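/- arXiv:2401.06680 — 2 statements merged into one kernel-verified Lean document; each statement's English description precedes it below -/
import Mathlib

section
/- Let M^n(P, λ) be a small cover over the product of simplices P = Δ^{n_1} × ⋯ × Δ^{n_m}, with mod-2 cohomology ring H*(M^n(P,λ); Z_2) ≅ Z_2[y_1,…,y_m]/I where I = ⟨Γ_1,…,Γ_m⟩ and Γ_j = y_j · ∏_{k=1}^{n_j} (y_j + Σ_{ℓ=1}^{j−1} β^j_{ℓk} y_ℓ) for coefficients β^j_{ℓk} ∈ Z_2 coming from the associated unipotent lower-triangular Bott matrix. Then for each j ∈ {1,…,m}, y_j^{n_j} ≠ 0 in this quotient ring; moreover the product y_1^{n_1} y_2^{n_2} ⋯ y_m^{n_m} ≠ 0. -/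
open Set unitInterval
open scoped TensorProduct

noncomputable section

/-! ### Basic homotopy invariants -/

/-- The inclusion of a subset as a continuous map. -/
def subIncl {X : Type*} [TopologicalSpace X] (A : Set X) : C(A, X) :=
  ⟨fun a => a.1, continuous_subtype_val⟩

/-- The Lusternik–Schnirelmann category of a space `X`: the least `r` such that `X`
admits an open cover by `r` sets, each of whose inclusions into `X` is null-homotopic. -/
def LSCat (X : Type*) [TopologicalSpace X] : ℕ :=
  sInf {r : ℕ | ∃ U : Fin r → Set X, (∀ i, IsOpen (U i)) ∧ (⋃ i, U i) = Set.univ ∧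
    ∀ i, ∃ x₀ : X, (subIncl (U i)).Homotopic (ContinuousMap.const _ x₀)}

/-- Farber's topological complexity of `X`: the least `k` such that `X × X` admits an
open cover by `k` sets, on each of which the free path fibration
`γ ↦ (γ 0, γ 1)` admits a continuous section. -/
def FarberTC (X : Type*) [TopologicalSpace X] : ℕ :=
  sInf {k : ℕ | ∃ U : Fin k → Set (X × X), (∀ i, IsOpen (U i)) ∧ (⋃ i, U i) = Set.univ ∧
    ∀ i, ∃ s : C(U i, C(unitInterval, X)),
      ∀ p : U i, s p 0 = (p : X × X).1 ∧ s p 1 = (p : X × X).2}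

/-- The equivariant Lusternik–Schnirelmann category for the `ℤ/2`-action generated by an
involution `τ` on `X`: the least `r` such that `X` is covered by `r` `τ`-invariant open
sets, each of which can be `τ`-equivariantly deformed inside `X` into a single orbit. -/
def EquivCatInvol {X : Type*} [TopologicalSpace X] (τ : X → X) : ℕ :=
  sInf {r : ℕ | ∃ U : Fin r → Set X, (∀ i, IsOpen (U i)) ∧ (⋃ i, U i) = Set.univ ∧
    (∀ i, τ '' U i = U i) ∧
    ∀ i, ∃ H : C(↥(U i) × unitInterval, X),
      (∀ u : U i, H (u, 0) = (u : X)) ∧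
      (∀ (u : X) (hu : u ∈ U i) (hτu : τ u ∈ U i) (t : unitInterval),
        H (⟨τ u, hτu⟩, t) = τ (H (⟨u, hu⟩, t))) ∧
      ∃ x₀ : X, ∀ u : U i, H (u, 1) = x₀ ∨ H (u, 1) = τ x₀}

/-- The equivariant topological complexity for the `ℤ/2`-action generated by an involution
`τ` on `X`: the equivariant sectional category of the free path fibration with respect to
the diagonal actions. -/
def EquivTCInvol {X : Type*} [TopologicalSpace X] (τ : X → X) : ℕ :=
  sInf {k : ℕ | ∃ U : Fin k → Set (X × X), (∀ i, IsOpen (U i)) ∧ (⋃ i, U i) = Set.univ ∧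
    (∀ i, (fun p : X × X => (τ p.1, τ p.2)) '' U i = U i) ∧
    ∀ i, ∃ s : C(U i, C(unitInterval, X)),
      (∀ p : U i, s p 0 = (p : X × X).1 ∧ s p 1 = (p : X × X).2) ∧
      (∀ (p : X × X) (hp : p ∈ U i) (hq : (τ p.1, τ p.2) ∈ U i) (t : unitInterval),
        s ⟨(τ p.1, τ p.2), hq⟩ t = τ (s ⟨p, hp⟩ t))}

/-- The ordered configuration space of two distinct points of `X`. -/
abbrev ConfTwo (X : Type*) [TopologicalSpace X] := {p : X × X // p.1 ≠ p.2}

/-- The symmetric topological complexity of Farber–Grant: `TC^S(X) = 1 + secat(π'')`,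
where `π'' : P'X/ℤ₂ → B(X;2)` is induced by the free path fibration restricted to paths
with distinct endpoints.  Sections of `π''` over open sets of `B(X;2)` correspond to
`ℤ/2`-equivariant sections of `π' : P'X → F(X;2)` over symmetric (swap-invariant) open
sets of the ordered configuration space, which is how we phrase it. -/
def TCSymm (X : Type*) [TopologicalSpace X] : ℕ :=
  1 + sInf {k : ℕ | ∃ U : Fin k → Set (ConfTwo X),
    (∀ i, IsOpen (U i)) ∧ (⋃ i, U i) = Set.univ ∧
    (∀ i, ∀ p : ConfTwo X, p ∈ U i →
      (⟨(p.1.2, p.1.1), Ne.symm p.2⟩ : ConfTwo X) ∈ U i) ∧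
    ∀ i, ∃ s : C(U i, C(unitInterval, X)),
      (∀ p : U i, (s p 0 = (p : ConfTwo X).1.1 ∧ s p 1 = (p : ConfTwo X).1.2) ∧
        s p 0 ≠ s p 1) ∧
      (∀ (p : ConfTwo X) (hp : p ∈ U i)
        (hq : (⟨(p.1.2, p.1.1), Ne.symm p.2⟩ : ConfTwo X) ∈ U i) (t : unitInterval),
        s ⟨⟨(p.1.2, p.1.1), Ne.symm p.2⟩, hq⟩ t = s ⟨p, hp⟩ (unitInterval.symm t))}

/-! ### Cup-length and zero-divisors-cup-length -/

/-- The zero-divisors-cup-length of a commutative `ℤ/2`-algebra `A`: the largest `k`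
for which there are `k` elements of the kernel of the multiplication map
`A ⊗ A → A` whose product is nonzero. -/
def zclRing (A : Type*) [CommRing A] [Algebra (ZMod 2) A] : ℕ :=
  sSup {k : ℕ | ∃ u : Fin k → (A ⊗[ZMod 2] A),
    (∀ i, LinearMap.mul' (ZMod 2) A (u i) = 0) ∧ ∏ i, u i ≠ 0}

/-- The cup-length of a commutative ring relative to an ideal `J` (of "positive degree"
elements): the largest `k` for which some `k` elements of `J` have nonzero product. -/
def clIdeal {A : Type*} [CommRing A] (J : Ideal A) : ℕ :=
  sSup {k : ℕ | ∃ u : Fin k → A, (∀ i, u i ∈ J) ∧ ∏ i, u i ≠ 0}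

/-- The mod 2 cohomology ring of real projective `n`-space, `ℤ₂[x]/(x^{n+1})`. -/
abbrev RPCohomology (n : ℕ) :=
  Polynomial (ZMod 2) ⧸ Ideal.span ({(Polynomial.X : Polynomial (ZMod 2)) ^ (n + 1)} : Set (Polynomial (ZMod 2)))

/-- The zero-divisors-cup-length of `ℝP^n` with `ℤ/2`-coefficients. -/
def zclRP (n : ℕ) : ℕ := zclRing (RPCohomology n)

/-! ### Characteristic pairs and real torus manifolds -/

/-- A `ℤ/2`-characteristic pair `(P, λ)`: the orbit space `P` (a compact connected nice
manifold with corners, recorded here through its topology and its facet structure)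
together with a characteristic function `λ` on the facets satisfying the
Davis–Januszkiewicz nondegeneracy condition. -/
structure CharPair (n : ℕ) where
  P : Type
  [instTop : TopologicalSpace P]
  [instT2 : T2Space P]
  [instCompact : CompactSpace P]
  [instConn : ConnectedSpace P]
  facets : Set (Set P)
  facetsFinite : facets.Finite
  facetsClosed : ∀ F ∈ facets, IsClosed F
  facetsNonempty : facets.Nonempty
  facetNe : ∀ F ∈ facets, F.Nonempty
  lambda : Set P → Fin n → ZMod 2
  nondeg : ∀ p : P, LinearIndependent (ZMod 2)
    (fun F : {F : Set P // F ∈ facets ∧ p ∈ F} => lambda F.1)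
  spanning : Submodule.span (ZMod 2) (lambda '' facets) = ⊤

attribute [instance] CharPair.instTop CharPair.instT2 CharPair.instCompact CharPair.instConn

variable {n : ℕ}

/-- The identification relation of the Davis–Januszkiewicz construction on `P × ℤ₂ⁿ` :
`(p,g) ∼ (q,h)` iff `p = q` and `g - h` lies in the span of the characteristic vectors
of the facets containing `p`. -/
def CharPair.rel (c : CharPair n) (a b : c.P × (Fin n → ZMod 2)) : Prop :=
  a.1 = b.1 ∧ a.2 - b.2 ∈ Submodule.span (ZMod 2) (c.lambda '' {F ∈ c.facets | a.1 ∈ F})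

/-- The real torus manifold `M(P,λ) = (P × ℤ₂ⁿ)/∼` associated with a characteristic
pair (every real torus manifold arises this way, up to equivariant homeomorphism). -/
def CharPair.Space (c : CharPair n) : Type := Quot c.rel

instance (c : CharPair n) : TopologicalSpace c.Space := by
  unfold CharPair.Space; infer_instance

/-- The action of `g ∈ ℤ₂ⁿ` on `M(P,λ)`. -/
def CharPair.act (c : CharPair n) (g : Fin n → ZMod 2) : c.Space → c.Space :=
  Quot.map (fun a => (a.1, g + a.2)) (by
    rintro ⟨p, h⟩ ⟨q, h'⟩ ⟨hpq, hmem⟩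
    refine ⟨hpq, ?_⟩
    simpa [add_sub_add_left_eq_sub] using hmem)

/-- The characteristic submanifold `q⁻¹(F) ⊆ M(P,λ)` corresponding to a facet `F`. -/
def CharPair.charSub (c : CharPair n) (F : Set c.P) : Set c.Space :=
  {y | ∃ p ∈ F, ∃ g, y = Quot.mk c.rel (p, g)}

/-- `P` is retractable in the sense of Sarkar (Definition 3.2); modeled here by the
requirement that `P` deformation retracts to a point. -/
def CharPair.Retractable (c : CharPair n) : Prop :=
  ∃ (v : c.P) (H : C(c.P × unitInterval, c.P)), (∀ p, H (p, 0) = p) ∧ ∀ p, H (p, 1) = v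

/-! ### Simple polytopes -/

/-- `F` is a facet of the convex body `Q`: a maximal proper nonempty exposed face. -/
def IsPolytopeFacet {n : ℕ} (Q F : Set (EuclideanSpace ℝ (Fin n))) : Prop :=
  IsExposed ℝ Q F ∧ F ≠ Q ∧ F.Nonempty ∧
    ∀ G, IsExposed ℝ Q G → F ⊆ G → G ≠ Q → G = F

/-- `Q ⊆ ℝⁿ` is an `n`-dimensional simple polytope: the convex hull of finitely many
points, full-dimensional, in which every vertex lies on exactly `n` facets. -/
def IsSimplePolytope (n : ℕ) (Q : Set (EuclideanSpace ℝ (Fin n))) : Prop :=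
  (∃ S : Finset (EuclideanSpace ℝ (Fin n)), Q = convexHull ℝ (S : Set (EuclideanSpace ℝ (Fin n)))) ∧
  (interior Q).Nonempty ∧
  ∀ v ∈ Q.extremePoints ℝ, {F | IsPolytopeFacet Q F ∧ v ∈ F}.ncard = n

/-- The characteristic pair is that of a small cover: the orbit space is an
`n`-dimensional simple polytope. -/
def CharPair.IsSmallCover (c : CharPair n) : Prop :=
  ∃ Q : Set (EuclideanSpace ℝ (Fin n)), IsSimplePolytope n Q ∧ Nonempty (c.P ≃ₜ ↥Q)

/-! ### Small covers over products of simplices (generalized real Bott manifolds) -/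

/-- The product of simplices `Δ^{n(0)} × ⋯ × Δ^{n(m-1)}`. -/
abbrev ProdSimplex (m : ℕ) (nd : Fin m → ℕ) :=
  Π j : Fin m, ↥(stdSimplex ℝ (Fin (nd j + 1)))

/-- A characteristic function on the product of simplices `Δ^{n(0)} × ⋯ × Δ^{n(m-1)}`,
whose facets are indexed by pairs `(j, r)` (the `r`-th facet of the `j`-th simplex is
where the `r`-th barycentric coordinate vanishes). -/
structure ProdSimplexCharFun (m : ℕ) (nd : Fin m → ℕ) where
  lambda : (Σ j : Fin m, Fin (nd j + 1)) → (Fin (∑ j, nd j) → ZMod 2)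
  nondeg : ∀ x : ProdSimplex m nd,
    LinearIndependent (ZMod 2)
      (fun F : {F : Σ j : Fin m, Fin (nd j + 1) // ((x F.1 : Fin (nd F.1 + 1) → ℝ) F.2 = 0)} =>
        lambda F.1)

/-- The small cover (generalized real Bott manifold) over a product of simplices
determined by the characteristic function `c`. -/
def ProdSimplexCharFun.Space {m : ℕ} {nd : Fin m → ℕ} (c : ProdSimplexCharFun m nd) : Type :=
  Quot (fun a b : ProdSimplex m nd × (Fin (∑ j, nd j) → ZMod 2) =>
    a.1 = b.1 ∧ a.2 - b.2 ∈ Submodule.span (ZMod 2)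
      {v | ∃ F : Σ j : Fin m, Fin (nd j + 1),
        ((a.1 F.1 : Fin (nd F.1 + 1) → ℝ) F.2 = 0) ∧ v = c.lambda F})

instance {m : ℕ} {nd : Fin m → ℕ} (c : ProdSimplexCharFun m nd) : TopologicalSpace c.Space := by
  unfold ProdSimplexCharFun.Space; infer_instance

/-! ### The cohomology ring presentation of generalized real Bott manifolds -/

/-- The generator `Γ_j = y_j ∏_{k=1}^{n_j} (y_j + Σ_{ℓ<j} β^j_{ℓk} y_ℓ)` of the ideal in
the mod 2 cohomology of a generalized real Bott manifold. -/
def BottGamma (m : ℕ) (nd : Fin m → ℕ) (β : Fin m → Fin m → ℕ → ZMod 2) (j : Fin m) :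
    MvPolynomial (Fin m) (ZMod 2) :=
  MvPolynomial.X j * ∏ k ∈ Finset.range (nd j),
    (MvPolynomial.X j +
      ∑ ℓ ∈ Finset.univ.filter (fun ℓ : Fin m => ℓ < j),
        MvPolynomial.C (β j ℓ k) * MvPolynomial.X ℓ)

/-- The mod 2 cohomology ring `ℤ₂[y_1,…,y_m]/⟨Γ_1,…,Γ_m⟩` of a generalized real Bott
manifold presented by the Bott matrix data `β`. -/
abbrev BottRing (m : ℕ) (nd : Fin m → ℕ) (β : Fin m → Fin m → ℕ → ZMod 2) :=
  MvPolynomial (Fin m) (ZMod 2) ⧸ Ideal.span (Set.range (BottGamma m nd β))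

/-- The class `y_j` in the Bott ring. -/
def BottY (m : ℕ) (nd : Fin m → ℕ) (β : Fin m → Fin m → ℕ → ZMod 2) (j : Fin m) :
    BottRing m nd β :=
  Ideal.Quotient.mk _ (MvPolynomial.X j)

/-! ### The Davis–Januszkiewicz presentation of `H^*(M(P,λ); ℤ₂)` -/

/-- The Davis–Januszkiewicz ideal: the Stanley–Reisner relations together with the linear
relations determined by `λ`. -/
def CharPair.djIdeal (c : CharPair n) : Ideal (MvPolynomial (↥c.facets) (ZMod 2)) :=
  haveI := c.facetsFinite.fintype
  Ideal.span
    ({q | ∃ S : Finset ↥c.facets, (⋂ F ∈ S, (F : Set c.P)) = ∅ ∧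
        q = ∏ F ∈ S, MvPolynomial.X F} ∪
      Set.range (fun i : Fin n =>
        ∑ F : ↥c.facets, MvPolynomial.C (c.lambda F i) * MvPolynomial.X F))

/-- The mod 2 cohomology ring of `M(P,λ)` in its Davis–Januszkiewicz presentation. -/
def CharPair.cohRing (c : CharPair n) : Type :=
  MvPolynomial (↥c.facets) (ZMod 2) ⧸ c.djIdeal

instance (c : CharPair n) : CommRing c.cohRing :=
  inferInstanceAs (CommRing (MvPolynomial (↥c.facets) (ZMod 2) ⧸ c.djIdeal))

instance (c : CharPair n) : Algebra (ZMod 2) c.cohRing :=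
  inferInstanceAs (Algebra (ZMod 2) (MvPolynomial (↥c.facets) (ZMod 2) ⧸ c.djIdeal))

/-- The ideal of positive-degree elements of `H^*(M(P,λ); ℤ₂)` (generated by the
degree-one classes dual to the characteristic submanifolds). -/
def CharPair.cohPos (c : CharPair n) : Ideal c.cohRing :=
  Ideal.span (Set.range fun F : ↥c.facets =>
    (Ideal.Quotient.mk c.djIdeal (MvPolynomial.X F) : c.cohRing))

/-- The mod 2 cup-length of `M(P,λ)`. -/
def CharPair.cl (c : CharPair n) : ℕ := clIdeal c.cohPos

/-- The mod 2 zero-divisors-cup-length of `M(P,λ)`. -/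
def CharPair.zcl (c : CharPair n) : ℕ := zclRing c.cohRing

/-! ### Dold manifolds of real torus type -/

/-- The Dold manifold of real torus type
`D(M; p₁,…,p_r) = (M × S^{p₁} × ⋯ × S^{p_r}) / ((y,x) ∼ (τ y, -x))`. -/
def DoldSpace {M : Type} [TopologicalSpace M] (τ : M → M) {r : ℕ} (p : Fin r → ℕ) : Type :=
  Quot (fun a b : M × (Π i : Fin r, ↥(Metric.sphere (0 : EuclideanSpace ℝ (Fin (p i + 1))) 1)) =>
    b.1 = τ a.1 ∧ ∀ i, (b.2 i : EuclideanSpace ℝ (Fin (p i + 1))) =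
      -(a.2 i : EuclideanSpace ℝ (Fin (p i + 1))))

instance {M : Type} [TopologicalSpace M] (τ : M → M) {r : ℕ} (p : Fin r → ℕ) :
    TopologicalSpace (DoldSpace τ p) := by
  unfold DoldSpace; infer_instance

/-! ### Auxiliary: iterated adjunction of roots for the Bott relations -/

namespace Stmt3Aux

open Polynomial

/-- A package of a `ℤ/2`-algebra together with a sequence of elements. -/
structure Pack where
  A : Type
  [ring : CommRing A]
  [alg : Algebra (ZMod 2) A]
  a : ℕ → A

attribute [instance] Pack.ring Pack.alg

variable (β : ℕ → ℕ → ℕ → ZMod 2) (nd : ℕ → ℕ)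

/-- The linear combination `∑_{ℓ<j} β j ℓ k • a ℓ`. -/
def lin (P : Pack) (j k : ℕ) : P.A :=
  ∑ ℓ ∈ Finset.range j, algebraMap (ZMod 2) P.A (β j ℓ k) * P.a ℓ

/-- The monic polynomial `X ∏_{k<nd j} (X + lin j k)`. -/
def gpoly (P : Pack) (j : ℕ) : Polynomial P.A :=
  X * ∏ k ∈ Finset.range (nd j), (X + C (lin β P j k))

lemma gpoly_monic (P : Pack) (j : ℕ) : (gpoly β nd P j).Monic :=
  monic_X.mul (monic_prod_of_monic _ _ fun _ _ => monic_X_add_C _)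

lemma gpoly_natDegree (P : Pack) [Nontrivial P.A] (j : ℕ) :
    (gpoly β nd P j).natDegree = nd j + 1 := by
  rw [gpoly, monic_X.natDegree_mul (monic_prod_of_monic _ _ fun _ _ => monic_X_add_C _),
    natDegree_prod_of_monic _ _ fun _ _ => monic_X_add_C _]
  simp [natDegree_X, natDegree_X_add_C]
  omega

/-- Adjoin a root of `gpoly` at stage `j`. -/
def step (j : ℕ) (P : Pack) : Pack where
  A := AdjoinRoot (gpoly β nd P j)
  a := fun i => if i = j then AdjoinRoot.root _ else AdjoinRoot.of _ (P.a i)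

/-- The tower of root adjunctions. -/
def tower (M : ℕ) : Pack :=
  Nat.rec { A := ZMod 2, a := fun _ => 0 } (fun j P => step β nd j P) M

lemma step_a_of (j : ℕ) (P : Pack) {i : ℕ} (h : i ≠ j) :
    (step β nd j P).a i = AdjoinRoot.of _ (P.a i) := by
  simp [step, h]

lemma step_a_root (j : ℕ) (P : Pack) :
    (step β nd j P).a j = AdjoinRoot.root (gpoly β nd P j) := by
  simp [step]

lemma step_lin (j' j k : ℕ) (P : Pack) (hj : j ≤ j') :
    lin β (step β nd j' P) j k = AdjoinRoot.of _ (lin β P j k) := by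
  unfold lin
  rw [map_sum]
  refine Finset.sum_congr rfl fun ℓ hℓ => ?_
  have hℓj : ℓ ≠ j' := by
    have := Finset.mem_range.mp hℓ; omega
  rw [map_mul, step_a_of β nd j' P hℓj]
  congr 1

/-- The Bott relations hold in the tower. -/
lemma tower_rel : ∀ M j : ℕ, j < M →
    (tower β nd M).a j *
      ∏ k ∈ Finset.range (nd j),
        ((tower β nd M).a j + lin β (tower β nd M) j k) = 0 := by
  intro M
  induction M with
  | zero => intro j hj; omega
  | succ M ih =>
    intro j hj
    have htow : tower β nd (M + 1) = step β nd M (tower β nd M) := rfl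
    rw [htow]
    set P := tower β nd M with hP
    rcases Nat.lt_or_ge j M with hjM | hjM
    · -- push the relation at stage `M` forward along `of`
      have hrel := ih j hjM
      have hja : (step β nd M P).a j = AdjoinRoot.of _ (P.a j) :=
        step_a_of β nd M P (by omega)
      have hcalc : (step β nd M P).a j *
            ∏ k ∈ Finset.range (nd j), ((step β nd M P).a j + lin β (step β nd M P) j k)
          = AdjoinRoot.of (gpoly β nd P M)
              (P.a j * ∏ k ∈ Finset.range (nd j), (P.a j + lin β P j k)) := by
            rw [map_mul, map_prod, hja]
            congr 1
            refine Finset.prod_congr rfl fun k _ => ?_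
            rw [map_add, step_lin β nd M j k P (le_of_lt hjM)]
            rfl
      exact hcalc.trans (by rw [hrel, map_zero]; rfl)
    · -- `j = M` : the new root satisfies its defining relation
      have hjM' : j = M := by omega
      subst hjM'
      have hmk : AdjoinRoot.mk (gpoly β nd P j) (gpoly β nd P j) = 0 := AdjoinRoot.mk_self
      rw [gpoly, map_mul, map_prod] at hmk
      simp only [map_add, AdjoinRoot.mk_X, AdjoinRoot.mk_C] at hmk
      have hlin : ∀ k, lin β (step β nd j P) j k
          = AdjoinRoot.of (gpoly β nd P j) (lin β P j k) :=
        fun k => step_lin β nd j j k P le_rfl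
      simp only [step_a_root, hlin]
      exact hmk

/-- The key monomial is nonzero in the tower. -/
lemma tower_prod : ∀ M : ℕ, ∏ j ∈ Finset.range M, (tower β nd M).a j ^ nd j ≠ 0 := by
  intro M
  induction M with
  | zero =>
    simp only [Finset.range_zero, Finset.prod_empty]
    show (1 : ZMod 2) ≠ 0
    decide
  | succ M ih =>
    have htow : tower β nd (M + 1) = step β nd M (tower β nd M) := rfl
    rw [htow]
    set P := tower β nd M with hP
    set g := gpoly β nd P M with hg
    intro h
    rw [Finset.prod_range_succ] at h
    have e1 : ∏ j ∈ Finset.range M, (step β nd M P).a j ^ nd j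
        = AdjoinRoot.of g (∏ j ∈ Finset.range M, P.a j ^ nd j) := by
      rw [map_prod]
      refine Finset.prod_congr rfl fun j hj => ?_
      have : j ≠ M := by have := Finset.mem_range.mp hj; omega
      rw [map_pow, step_a_of β nd M P this]
      rfl
    rw [e1, step_a_root] at h
    -- now `of g c * root ^ nd M = 0` with `c ≠ 0`
    set c := ∏ j ∈ Finset.range M, P.a j ^ nd j with hc
    haveI : Nontrivial P.A := nontrivial_of_ne c 0 ih
    have hmk : AdjoinRoot.mk g (C c * X ^ nd M) = 0 := by
      rw [map_mul, map_pow, AdjoinRoot.mk_C, AdjoinRoot.mk_X]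
      exact h
    have hne : (C c * X ^ nd M : Polynomial P.A) ≠ 0 := by
      intro h0
      have := congrArg (fun p => Polynomial.coeff p (nd M)) h0
      simp [coeff_C_mul, coeff_X_pow] at this
      exact ih this
    exact AdjoinRoot.mk_ne_zero_of_natDegree_lt (gpoly_monic β nd P M) hne
      (by rw [gpoly_natDegree]; exact Nat.lt_succ_of_le (natDegree_C_mul_X_pow_le c (nd M))) hmk

/-- Converting a filtered sum over `Fin m` to a `range` sum. -/
lemma sum_filter_lt {R : Type*} [AddCommMonoid R] {m : ℕ} (j : Fin m) (f : Fin m → R)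
    (F : ℕ → R) (hF : ∀ ℓ : Fin m, ℓ < j → F ℓ.1 = f ℓ) :
    ∑ ℓ ∈ Finset.univ.filter (fun ℓ : Fin m => ℓ < j), f ℓ
      = ∑ ℓ ∈ Finset.range j.1, F ℓ := by
  refine Finset.sum_bij (fun (ℓ : Fin m) _ => ℓ.1) ?_ ?_ ?_ ?_
  · intro a ha
    rw [Finset.mem_range]
    exact Fin.lt_iff_val_lt_val.mp (Finset.mem_filter.mp ha).2
  · intro a _ b _ hab
    exact Fin.val_injective hab
  · intro b hb
    have hb' := Finset.mem_range.mp hb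
    refine ⟨⟨b, lt_trans hb' j.isLt⟩, ?_, rfl⟩
    simp only [Finset.mem_filter, Finset.mem_univ, true_and]
    exact hb'
  · intro a ha
    exact (hF a (Finset.mem_filter.mp ha).2).symm

end Stmt3Aux

/-! ### The statement -/

theorem stmt3 (m : ℕ) (nd : Fin m → ℕ) (hnd : ∀ j, 0 < nd j)
    (β : Fin m → Fin m → ℕ → ZMod 2) :
    (∀ j : Fin m, (BottY m nd β j) ^ (nd j) ≠ 0) ∧
    (∏ j : Fin m, (BottY m nd β j) ^ (nd j)) ≠ 0 := by
  classical
  -- extend the data from `Fin m` to `ℕ`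
  set ndh : ℕ → ℕ := fun j => if h : j < m then nd ⟨j, h⟩ else 0 with hndh
  set βh : ℕ → ℕ → ℕ → ZMod 2 := fun j ℓ k =>
    if h : j < m ∧ ℓ < m then β ⟨j, h.1⟩ ⟨ℓ, h.2⟩ k else 0 with hβh
  set P := Stmt3Aux.tower βh ndh m with hPdef
  -- the evaluation map into the tower
  set φ : MvPolynomial (Fin m) (ZMod 2) →ₐ[ZMod 2] P.A :=
    MvPolynomial.aeval (fun j : Fin m => P.a j.1) with hφ
  have hΓ : ∀ j : Fin m, φ (BottGamma m nd β j) = 0 := by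
    intro j
    have hrel := Stmt3Aux.tower_rel βh ndh m j.1 j.isLt
    have hnd : ndh j.1 = nd j := by simp [hndh]
    rw [hnd] at hrel
    rw [hφ, BottGamma]
    simp only [map_mul, map_prod, map_add, map_sum, MvPolynomial.aeval_X, MvPolynomial.aeval_C]
    rw [← hrel]
    congr 1
    refine Finset.prod_congr rfl fun k _ => ?_
    congr 1
    rw [Stmt3Aux.lin]
    refine Stmt3Aux.sum_filter_lt j _ _ fun ℓ hℓ => ?_
    have hβ : βh j.1 ℓ.1 k = β j ℓ k := by
      simp [hβh, j.isLt, ℓ.isLt]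
    rw [hβ]
  -- the span of the relations is killed by `φ`
  have hker : Ideal.span (Set.range (BottGamma m nd β)) ≤ RingHom.ker φ.toRingHom := by
    rw [Ideal.span_le]
    rintro _ ⟨j, rfl⟩
    exact hΓ j
  -- the image of the big monomial is nonzero
  have hprod : φ (∏ j : Fin m, MvPolynomial.X j ^ nd j) ≠ 0 := by
    rw [map_prod]
    have : ∀ j : Fin m, φ (MvPolynomial.X j ^ nd j) = P.a j.1 ^ ndh j.1 := by
      intro j
      rw [map_pow, MvPolynomial.aeval_X]
      congr 1
      simp [hndh, j.isLt]
    rw [Finset.prod_congr rfl fun j _ => this j,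
      Fin.prod_univ_eq_prod_range (fun k => P.a k ^ ndh k) m]
    exact Stmt3Aux.tower_prod βh ndh m
  have main : (∏ j : Fin m, (BottY m nd β j) ^ (nd j)) ≠ 0 := by
    intro h
    have : (∏ j : Fin m, (BottY m nd β j) ^ (nd j))
        = Ideal.Quotient.mk _ (∏ j : Fin m, MvPolynomial.X j ^ nd j) := by
      rw [map_prod]
      exact Finset.prod_congr rfl fun j _ => by rw [map_pow]; rfl
    rw [this, Ideal.Quotient.eq_zero_iff_mem] at h
    exact hprod (hker h)
  refine ⟨fun j hj => main ?_, main⟩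
  rw [← Finset.prod_erase_mul _ _ (Finset.mem_univ j), hj, mul_zero]

end
end

section
/- In the quotient ring A = Z_2[y_1,…,y_m]/I, where I = ⟨Γ_1,…,Γ_m⟩ with Γ_j = y_j ∏_{k=1}^{n_j} (y_j + Σ_{ℓ<j} β^j_{ℓk} y_ℓ) (coefficients β^j_{ℓk} ∈ Z_2), set a_j = 1⊗y_j − y_j⊗1 ∈ A ⊗_{Z_2} A. If d_j = 2^{r_j} − 1 satisfies n_j ≤ d_j < 2 n_j for each j, then the product a_1^{d_1} a_2^{d_2} ⋯ a_m^{d_m} is nonzero in A ⊗_{Z_2} A, and each a_j lies in the kernel of the multiplication map A ⊗ A → A. -/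
open Set unitInterval
open scoped TensorProduct

noncomputable section

variable {n : ℕ}

/-! ### Auxiliary machinery for `stmt5` -/

section Stmt5Aux

set_option maxHeartbeats 2000000
set_option synthInstance.maxHeartbeats 1000000

open MvPolynomial

/-- In a `ZMod 2`-module, negation is the identity. -/
lemma zmod2_neg_eq {M : Type*} [AddCommGroup M] [Module (ZMod 2) M] (v : M) : -v = v := by
  have h : v + v = 0 := by
    have h2 : (2 : ZMod 2) • v = 0 := by
      rw [show (2 : ZMod 2) = 0 by decide, zero_smul]
    rwa [two_smul] at h2
  exact neg_eq_of_add_eq_zero_left h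

lemma zmod2_sub_eq_add {M : Type*} [AddCommGroup M] [Module (ZMod 2) M] (u v : M) :
    u - v = u + v := by rw [sub_eq_add_neg, zmod2_neg_eq]

/-- All binomial coefficients `C(2^r - 1, i)` are odd. -/
lemma zmod2_choose_two_pow_sub_one {r i : ℕ} (hi : i < 2 ^ r) :
    (((2 ^ r - 1).choose i : ℕ) : ZMod 2) = 1 := by
  have hpow : ((1 + Polynomial.X : Polynomial (ZMod 2)) ^ (2 ^ r))
      = 1 + Polynomial.X ^ (2 ^ r) := by
    simpa using add_pow_char_pow (1 : Polynomial (ZMod 2)) Polynomial.X 2 r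
  have hne : (1 + Polynomial.X : Polynomial (ZMod 2)) ≠ 0 := fun h => by
    have := congrArg (fun p => Polynomial.coeff p 0) h
    simp at this
  have hgeom : (∑ k ∈ Finset.range (2 ^ r), (Polynomial.X : Polynomial (ZMod 2)) ^ k) * (1 + Polynomial.X)
      = 1 + Polynomial.X ^ (2 ^ r) := by
    calc (∑ k ∈ Finset.range (2 ^ r), (Polynomial.X : Polynomial (ZMod 2)) ^ k) * (1 + Polynomial.X)
        = (∑ k ∈ Finset.range (2 ^ r), (Polynomial.X : Polynomial (ZMod 2)) ^ k) * (Polynomial.X - 1) := by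
          rw [zmod2_sub_eq_add, add_comm]
      _ = Polynomial.X ^ (2 ^ r) - 1 := geom_sum_mul _ _
      _ = 1 + Polynomial.X ^ (2 ^ r) := by rw [zmod2_sub_eq_add, add_comm]
  have hkey : (1 + Polynomial.X : Polynomial (ZMod 2)) ^ (2 ^ r - 1) * (1 + Polynomial.X)
      = (∑ k ∈ Finset.range (2 ^ r), (Polynomial.X : Polynomial (ZMod 2)) ^ k) * (1 + Polynomial.X) := by
    rw [hgeom, ← hpow, ← pow_succ, Nat.sub_add_cancel Nat.one_le_two_pow]
  have h2 := mul_right_cancel₀ hne hkey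
  have h3 := congrArg (fun p => Polynomial.coeff p i) h2
  simp only [Polynomial.coeff_one_add_X_pow, Polynomial.finset_sum_coeff,
    Polynomial.coeff_X_pow] at h3
  rw [h3, Finset.sum_ite_eq (Finset.range (2 ^ r)) i (fun _ => (1 : ZMod 2)),
    if_pos (Finset.mem_range.mpr hi)]

/-- The pairing on a tensor square induced by two functionals. -/
def tpair {A : Type*} [AddCommMonoid A] [Module (ZMod 2) A]
    (φ ψ : A →ₗ[ZMod 2] ZMod 2) : TensorProduct (ZMod 2) A A →ₗ[ZMod 2] ZMod 2 :=
  (TensorProduct.lid (ZMod 2) (ZMod 2)).toLinearMap.comp (TensorProduct.map φ ψ)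

lemma tpair_tmul {A : Type*} [AddCommMonoid A] [Module (ZMod 2) A]
    (φ ψ : A →ₗ[ZMod 2] ZMod 2) (x y : A) :
    tpair φ ψ (x ⊗ₜ[ZMod 2] y) = φ x * ψ y := by
  simp [tpair, TensorProduct.lid_tmul, smul_eq_mul]

lemma filter_lt_castSucc (m : ℕ) (j : Fin m) :
    (Finset.univ.filter fun ℓ : Fin (m + 1) => ℓ < j.castSucc)
      = (Finset.univ.filter fun ℓ : Fin m => ℓ < j).map Fin.castSuccEmb := by
  ext ℓ
  simp only [Finset.mem_filter, Finset.mem_univ, true_and, Finset.mem_map]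
  constructor
  · intro hℓ
    have h1 : (ℓ : ℕ) < (j : ℕ) := hℓ
    refine ⟨⟨(ℓ : ℕ), h1.trans j.isLt⟩, ?_, ?_⟩
    · exact h1
    · rfl
  · rintro ⟨ℓ', hℓ', rfl⟩
    exact Fin.castSucc_lt_castSucc_iff.mpr hℓ'

lemma filter_lt_last (m : ℕ) :
    (Finset.univ.filter fun ℓ : Fin (m + 1) => ℓ < Fin.last m)
      = Finset.univ.map Fin.castSuccEmb := by
  ext ℓ
  simp only [Finset.mem_filter, Finset.mem_univ, true_and, Finset.mem_map]
  constructor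
  · intro hℓ
    have h1 : (ℓ : ℕ) < m := hℓ
    exact ⟨⟨(ℓ : ℕ), h1⟩, Fin.ext rfl⟩
  · rintro ⟨ℓ', rfl⟩
    exact Fin.castSucc_lt_last ℓ'

lemma BottGamma_castSucc (m : ℕ) (nd : Fin (m + 1) → ℕ)
    (β : Fin (m + 1) → Fin (m + 1) → ℕ → ZMod 2) (j : Fin m) :
    BottGamma (m + 1) nd β j.castSucc
      = rename Fin.castSucc
          (BottGamma m (fun j => nd j.castSucc)
            (fun j ℓ k => β j.castSucc ℓ.castSucc k) j) := by
  unfold BottGamma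
  rw [map_mul, rename_X, map_prod]
  congr 1
  refine Finset.prod_congr rfl fun k _ => ?_
  rw [map_add, rename_X, map_sum, filter_lt_castSucc, Finset.sum_map]
  congr 1
  refine Finset.sum_congr rfl fun ℓ _ => ?_
  rw [map_mul, rename_C, rename_X]
  rfl

/-- Evaluation of all variables at `0` kills every `BottGamma`, producing an algebra
map `BottRing → ZMod 2`. -/
def bottEval (m : ℕ) (nd : Fin m → ℕ) (β : Fin m → Fin m → ℕ → ZMod 2) :
    BottRing m nd β →ₐ[ZMod 2] ZMod 2 :=
  Ideal.Quotient.liftₐ _ (aeval fun _ => (0 : ZMod 2)) (by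
    intro a ha
    have h : Ideal.span (Set.range (BottGamma m nd β))
        ≤ RingHom.ker (aeval (R := ZMod 2) fun _ : Fin m => (0 : ZMod 2)).toRingHom := by
      rw [Ideal.span_le]
      rintro _ ⟨j, rfl⟩
      simp [SetLike.mem_coe, RingHom.mem_ker, BottGamma]
    exact RingHom.mem_ker.mp (h ha))

lemma bott_one_ne_zero (m : ℕ) (nd : Fin m → ℕ) (β : Fin m → Fin m → ℕ → ZMod 2) :
    (1 : BottRing m nd β) ≠ 0 := by
  intro h
  have := congrArg (bottEval m nd β) h
  simp only [map_one, map_zero] at this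
  exact one_ne_zero this

lemma bott_nontrivial (m : ℕ) (nd : Fin m → ℕ) (β : Fin m → Fin m → ℕ → ZMod 2) :
    Nontrivial (BottRing m nd β) :=
  nontrivial_of_ne 1 0 (bott_one_ne_zero m nd β)

lemma char2_add_pow {S : Type*} [CommRing S] [Algebra (ZMod 2) S] (x y : S) (D : ℕ)
    (hchoose : ∀ k, k ≤ D → (((D.choose k : ℕ)) : ZMod 2) = 1) :
    (x + y) ^ D = ∑ k ∈ Finset.range (D + 1), x ^ k * y ^ (D - k) := by
  rw [add_pow]
  refine Finset.sum_congr rfl fun k hk => ?_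
  have h1 : ((D.choose k : ℕ) : S) = 1 := by
    rw [← map_natCast (algebraMap (ZMod 2) S),
      hchoose k (Nat.lt_succ_iff.mp (Finset.mem_range.mp hk)), map_one]
  rw [h1, mul_one]

lemma step_pairing {A' : Type} [CommRing A'] [Algebra (ZMod 2) A'] [Nontrivial A']
    {g : Polynomial A'} (hmonic : g.Monic) {n D : ℕ} (hdeg : g.natDegree = 1 + n)
    (hnD : n ≤ D) (hD2n : D < 2 * n)
    (hchoose : ∀ k, k ≤ D → ((D.choose k : ℕ) : ZMod 2) = 1)
    (φ' ψ' : A' →ₗ[ZMod 2] ZMod 2) (z : TensorProduct (ZMod 2) A' A') :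
    tpair
      (φ'.comp (((Polynomial.lcoeff A' (D - n)).comp
        (AdjoinRoot.modByMonicHom hmonic)).restrictScalars (ZMod 2)))
      (ψ'.comp (((Polynomial.lcoeff A' n).comp
        (AdjoinRoot.modByMonicHom hmonic)).restrictScalars (ZMod 2)))
      ((Algebra.TensorProduct.map (IsScalarTower.toAlgHom (ZMod 2) A' (AdjoinRoot g))
          (IsScalarTower.toAlgHom (ZMod 2) A' (AdjoinRoot g)) z) *
        ((AdjoinRoot.root g ⊗ₜ[ZMod 2] (1 : AdjoinRoot g))
          + ((1 : AdjoinRoot g) ⊗ₜ[ZMod 2] AdjoinRoot.root g)) ^ D)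
      = tpair φ' ψ' z := by
  classical
  set rt := AdjoinRoot.root g with hrt
  set ι := IsScalarTower.toAlgHom (ZMod 2) A' (AdjoinRoot g) with hι
  set lam := fun t : ℕ => (((Polynomial.lcoeff A' t).comp
    (AdjoinRoot.modByMonicHom hmonic)).restrictScalars (ZMod 2)) with hlam
  set t₀ := D - n with ht₀
  have hιdef : ∀ x, ι x = AdjoinRoot.of g x := fun x => by
    rw [hι]
    show algebraMap _ _ x = _
    rw [AdjoinRoot.algebraMap_eq]
  have hdegW : g.degree = ((1 + n : ℕ) : WithBot ℕ) := by
    rw [Polynomial.degree_eq_natDegree hmonic.ne_zero, hdeg]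
  have hlam_eval : ∀ (t : ℕ) x (i : ℕ), i ≤ n →
      lam t (ι x * rt ^ i) = if t = i then x else 0 := by
    intro t x i hi
    have hx : ι x * rt ^ i = AdjoinRoot.mk g (Polynomial.C x * Polynomial.X ^ i) := by
      rw [map_mul, map_pow, AdjoinRoot.mk_X, hιdef]
      rfl
    rw [hx, hlam]
    simp only [LinearMap.restrictScalars_apply, LinearMap.comp_apply,
      AdjoinRoot.modByMonicHom_mk, Polynomial.lcoeff_apply]
    rw [(Polynomial.modByMonic_eq_self_iff hmonic).mpr ?hdeglt]
    case hdeglt =>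
      refine lt_of_le_of_lt (Polynomial.degree_C_mul_X_pow_le _ _) ?_
      rw [hdegW]
      exact_mod_cast (show i < 1 + n by omega)
    rw [Polynomial.coeff_C_mul, Polynomial.coeff_X_pow]
    simp only [mul_ite, mul_one, mul_zero]
  have hw : ((rt ⊗ₜ[ZMod 2] (1 : AdjoinRoot g)) + ((1 : AdjoinRoot g) ⊗ₜ[ZMod 2] rt)) ^ D
      = ∑ k ∈ Finset.range (D + 1), ((rt ^ k) ⊗ₜ[ZMod 2] (rt ^ (D - k))) := by
    rw [char2_add_pow _ _ D hchoose]
    refine Finset.sum_congr rfl fun k hk => ?_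
    rw [Algebra.TensorProduct.tmul_pow, Algebra.TensorProduct.tmul_pow,
      Algebra.TensorProduct.tmul_mul_tmul, one_pow, one_pow, mul_one, one_mul]
  have hterm0 : ∀ k, k ≤ D → k ≠ t₀ →
      (tpair (φ'.comp (lam t₀)) (ψ'.comp (lam n))).comp
        ((LinearMap.mulRight (ZMod 2) ((rt ^ k) ⊗ₜ[ZMod 2] (rt ^ (D - k)))).comp
          (Algebra.TensorProduct.map ι ι).toLinearMap) = 0 := by
    intro k hkD hkne
    apply TensorProduct.ext'
    intro x y
    simp only [LinearMap.comp_apply, LinearMap.mulRight_apply, AlgHom.toLinearMap_apply,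
      Algebra.TensorProduct.map_tmul, Algebra.TensorProduct.tmul_mul_tmul,
      tpair_tmul, LinearMap.zero_apply]
    rcases lt_or_gt_of_ne hkne with hlt | hgt
    · rw [hlam_eval t₀ x k (by omega), if_neg (by omega), map_zero, zero_mul]
    · rw [hlam_eval n y (D - k) (by omega), if_neg (by omega), map_zero, mul_zero]
  have hterm1 : (tpair (φ'.comp (lam t₀)) (ψ'.comp (lam n))).comp
      ((LinearMap.mulRight (ZMod 2) ((rt ^ t₀) ⊗ₜ[ZMod 2] (rt ^ (D - t₀)))).comp
        (Algebra.TensorProduct.map ι ι).toLinearMap) = tpair φ' ψ' := by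
    apply TensorProduct.ext'
    intro x y
    simp only [LinearMap.comp_apply, LinearMap.mulRight_apply, AlgHom.toLinearMap_apply,
      Algebra.TensorProduct.map_tmul, Algebra.TensorProduct.tmul_mul_tmul, tpair_tmul]
    have hDt : D - t₀ = n := by omega
    rw [hDt, hlam_eval n y n (le_refl n), if_pos rfl, hlam_eval t₀ x t₀ (by omega),
      if_pos rfl]
  have hsum_eq : ∀ k ∈ Finset.range (D + 1),
      tpair (φ'.comp (lam t₀)) (ψ'.comp (lam n))
        ((Algebra.TensorProduct.map ι ι z) * ((rt ^ k) ⊗ₜ[ZMod 2] (rt ^ (D - k))))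
        = if k = t₀ then tpair φ' ψ' z else 0 := by
    intro k hk
    by_cases hkt : k = t₀
    · subst hkt
      rw [if_pos rfl]
      have h := LinearMap.congr_fun hterm1 z
      simp only [LinearMap.comp_apply, LinearMap.mulRight_apply,
        AlgHom.toLinearMap_apply] at h
      exact h
    · rw [if_neg hkt]
      have h := LinearMap.congr_fun
        (hterm0 k (Nat.lt_succ_iff.mp (Finset.mem_range.mp hk)) hkt) z
      simp only [LinearMap.comp_apply, LinearMap.mulRight_apply,
        AlgHom.toLinearMap_apply, LinearMap.zero_apply] at h
      exact h
  rw [hw, Finset.mul_sum, map_sum, Finset.sum_congr rfl hsum_eq,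
    Finset.sum_ite_eq' (Finset.range (D + 1)) t₀ (fun _ => tpair φ' ψ' z),
    if_pos (Finset.mem_range.mpr (by omega))]

lemma bott_key : ∀ (m : ℕ) (nd : Fin m → ℕ) (β : Fin m → Fin m → ℕ → ZMod 2) (d : Fin m → ℕ),
    (∀ j, nd j ≤ d j) → (∀ j, d j < 2 * nd j) →
    (∀ j i, i ≤ d j → (((d j).choose i : ℕ) : ZMod 2) = 1) →
    ∃ φ ψ : BottRing m nd β →ₗ[ZMod 2] ZMod 2,
      tpair φ ψ (∏ j, ((1 : BottRing m nd β) ⊗ₜ[ZMod 2] BottY m nd β j -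
        BottY m nd β j ⊗ₜ[ZMod 2] (1 : BottRing m nd β)) ^ d j) = 1 := by
  intro m
  induction m with
  | zero =>
    intro nd β d _ _ _
    refine ⟨(bottEval 0 nd β).toLinearMap, (bottEval 0 nd β).toLinearMap, ?_⟩
    rw [Finset.univ_eq_empty, Finset.prod_empty, Algebra.TensorProduct.one_def, tpair_tmul]
    simp
  | succ m ih =>
    intro nd β d h1 h2 hc
    classical
    haveI : Nontrivial (BottRing m (fun j => nd j.castSucc)
        (fun j ℓ k => β j.castSucc ℓ.castSucc k)) := bott_nontrivial _ _ _
    set n : ℕ := nd (Fin.last m) with hn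
    set D : ℕ := d (Fin.last m) with hDdef
    have hnD : n ≤ D := h1 _
    have hD2n : D < 2 * n := h2 _
    obtain ⟨φ', ψ', hIH⟩ := ih (fun j => nd j.castSucc)
      (fun j ℓ k => β j.castSucc ℓ.castSucc k) (fun j => d j.castSucc)
      (fun j => h1 _) (fun j => h2 _) (fun j i hi => hc _ i hi)
    set Y' := BottY m (fun j => nd j.castSucc) (fun j ℓ k => β j.castSucc ℓ.castSucc k) with hY'
    -- the coefficients and the monic polynomial
    set c := fun k : ℕ => Ideal.Quotient.mk
        (Ideal.span (Set.range (BottGamma m (fun j => nd j.castSucc)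
          (fun j ℓ k => β j.castSucc ℓ.castSucc k))))
        (∑ ℓ : Fin m, MvPolynomial.C (β (Fin.last m) ℓ.castSucc k) * MvPolynomial.X ℓ) with hcc
    set g := Polynomial.X * ∏ k ∈ Finset.range n, (Polynomial.X + Polynomial.C (c k)) with hg
    have hmonicp : ∀ k ∈ Finset.range n, (Polynomial.X + Polynomial.C (c k)).Monic :=
      fun k _ => Polynomial.monic_X_add_C _
    have hmonic : g.Monic :=
      Polynomial.monic_X.mul (Polynomial.monic_prod_of_monic _ _ hmonicp)
    have hdeg : g.natDegree = 1 + n := by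
      rw [hg, Polynomial.Monic.natDegree_mul Polynomial.monic_X
        (Polynomial.monic_prod_of_monic _ _ hmonicp), Polynomial.natDegree_X,
        Polynomial.natDegree_prod_of_monic _ _ hmonicp]
      simp [Polynomial.natDegree_X_add_C]
    -- the AdjoinRoot model
    set rt := AdjoinRoot.root g with hrt
    set ι := IsScalarTower.toAlgHom (ZMod 2)
      (BottRing m (fun j => nd j.castSucc) (fun j ℓ k => β j.castSucc ℓ.castSucc k))
      (AdjoinRoot g) with hι
    have hιdef : ∀ x, ι x = AdjoinRoot.of g x := fun x => by
      rw [hι]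
      show algebraMap _ _ x = _
      rw [AdjoinRoot.algebraMap_eq]
    -- the evaluation map from the Bott ring to the AdjoinRoot model
    set v : Fin (m + 1) → AdjoinRoot g := Fin.lastCases rt (fun j => ι (Y' j)) with hv
    have hvlast : v (Fin.last m) = rt := by simp [hv]
    have hvc : ∀ j : Fin m, v j.castSucc = ι (Y' j) := fun j => by simp [hv]
    set Θ₀ := (MvPolynomial.aeval v :
      MvPolynomial (Fin (m + 1)) (ZMod 2) →ₐ[ZMod 2] AdjoinRoot g) with hΘ₀
    have hX : ∀ j, Θ₀ (MvPolynomial.X j) = v j := fun j => by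
      rw [hΘ₀]; exact MvPolynomial.aeval_X v j
    set ρ := ι.comp (Ideal.Quotient.mkₐ (ZMod 2)
      (Ideal.span (Set.range (BottGamma m (fun j => nd j.castSucc)
        (fun j ℓ k => β j.castSucc ℓ.castSucc k))))) with hρ
    have hρX : ∀ j : Fin m, ρ (MvPolynomial.X j) = ι (Y' j) := fun j => rfl
    have hgen1 : ∀ j : Fin m, Θ₀ (BottGamma (m + 1) nd β j.castSucc) = 0 := by
      intro j
      have hcomp : (v ∘ Fin.castSucc : Fin m → AdjoinRoot g) = ⇑ρ ∘ MvPolynomial.X := by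
        funext ℓ
        rw [Function.comp_apply, Function.comp_apply, hvc ℓ, hρX ℓ]
      have hz : Ideal.Quotient.mk (Ideal.span (Set.range (BottGamma m (fun j => nd j.castSucc)
            (fun j ℓ k => β j.castSucc ℓ.castSucc k))))
          (BottGamma m (fun j => nd j.castSucc) (fun j ℓ k => β j.castSucc ℓ.castSucc k) j) = 0 :=
        Ideal.Quotient.eq_zero_iff_mem.mpr (Ideal.subset_span ⟨j, rfl⟩)
      calc Θ₀ (BottGamma (m + 1) nd β j.castSucc)
          = ρ (BottGamma m (fun j => nd j.castSucc)
              (fun j ℓ k => β j.castSucc ℓ.castSucc k) j) := by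
            rw [hΘ₀, BottGamma_castSucc m nd β j, MvPolynomial.aeval_rename, hcomp,
              ← MvPolynomial.aeval_unique ρ]
        _ = 0 := by
            rw [hρ, AlgHom.comp_apply, Ideal.Quotient.mkₐ_eq_mk, hz, map_zero]
    have hsum : ∀ k : ℕ, Θ₀ (∑ ℓ ∈ Finset.univ.filter (fun ℓ : Fin (m + 1) => ℓ < Fin.last m),
        MvPolynomial.C (β (Fin.last m) ℓ k) * MvPolynomial.X ℓ) = ι (c k) := by
      intro k
      have hr : ι (c k) = ρ (∑ ℓ : Fin m,
          MvPolynomial.C (β (Fin.last m) ℓ.castSucc k) * MvPolynomial.X ℓ) := rfl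
      rw [hr, filter_lt_last, Finset.sum_map, map_sum, map_sum]
      refine Finset.sum_congr rfl fun ℓ _ => ?_
      rw [map_mul, map_mul, hX]
      rw [show (Fin.castSuccEmb ℓ : Fin (m + 1)) = ℓ.castSucc from rfl, hvc ℓ, ← hρX ℓ]
      congr 1
      rw [hΘ₀]
      rw [show (MvPolynomial.C (β (Fin.last m) ℓ.castSucc k) :
          MvPolynomial (Fin (m + 1)) (ZMod 2))
        = algebraMap (ZMod 2) _ (β (Fin.last m) ℓ.castSucc k) from rfl]
      rw [show (MvPolynomial.C (β (Fin.last m) ℓ.castSucc k) :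
          MvPolynomial (Fin m) (ZMod 2))
        = algebraMap (ZMod 2) _ (β (Fin.last m) ℓ.castSucc k) from rfl]
      rw [AlgHom.commutes, AlgHom.commutes]
    have hgen2 : Θ₀ (BottGamma (m + 1) nd β (Fin.last m)) = 0 := by
      have hL : Θ₀ (BottGamma (m + 1) nd β (Fin.last m))
          = rt * ∏ k ∈ Finset.range n, (rt + ι (c k)) := by
        rw [BottGamma.eq_1 (m + 1) nd β (Fin.last m)]
        rw [map_mul, map_prod, hX, hvlast]
        refine congrArg (rt * ·) (Finset.prod_congr (by rw [hn]) fun k _ => ?_)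
        rw [map_add, hX, hvlast, hsum k]
      have hR : (Polynomial.aeval rt) g = rt * ∏ k ∈ Finset.range n, (rt + ι (c k)) := by
        have h0 : (Polynomial.aeval rt) g = (Polynomial.aeval rt)
            (Polynomial.X * ∏ k ∈ Finset.range n, (Polynomial.X + Polynomial.C (c k))) := by
          rw [← hg]
        rw [h0, map_mul, map_prod, Polynomial.aeval_X]
        refine congrArg (rt * ·) (Finset.prod_congr rfl fun k _ => ?_)
        rw [map_add, Polynomial.aeval_X, Polynomial.aeval_C]
        congr 1
      rw [hL, ← hR, hrt, AdjoinRoot.aeval_eq, AdjoinRoot.mk_self]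
    have hker : ∀ a ∈ Ideal.span (Set.range (BottGamma (m + 1) nd β)), Θ₀ a = 0 := by
      intro a ha
      have h : Ideal.span (Set.range (BottGamma (m + 1) nd β))
          ≤ RingHom.ker Θ₀.toRingHom := by
        rw [Ideal.span_le]
        rintro _ ⟨j, rfl⟩
        simp only [SetLike.mem_coe]
        refine RingHom.mem_ker.mpr ?_
        induction j using Fin.lastCases with
        | last => exact hgen2
        | cast j => exact hgen1 j
      exact RingHom.mem_ker.mp (h ha)
    set θ := Ideal.Quotient.liftₐ (Ideal.span (Set.range (BottGamma (m + 1) nd β))) Θ₀ hker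
      with hθ
    have hθY : ∀ j, θ (BottY (m + 1) nd β j) = v j := by
      intro j
      rw [hθ, BottY, Ideal.Quotient.liftₐ_apply]
      exact (Ideal.Quotient.lift_mk _ _ _).trans (hX j)
    -- the tensor square maps
    set lam := fun t : ℕ => (((Polynomial.lcoeff _ t).comp
      (AdjoinRoot.modByMonicHom hmonic)).restrictScalars (ZMod 2)) with hlam
    refine ⟨φ'.comp ((lam (D - n)).comp θ.toLinearMap),
      ψ'.comp ((lam n).comp θ.toLinearMap), ?_⟩
    set zadd := ∏ j : Fin m, ((1 : BottRing m (fun j => nd j.castSucc)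
        (fun j ℓ k => β j.castSucc ℓ.castSucc k)) ⊗ₜ[ZMod 2] Y' j +
        Y' j ⊗ₜ[ZMod 2] (1 : BottRing m (fun j => nd j.castSucc)
        (fun j ℓ k => β j.castSucc ℓ.castSucc k))) ^ d j.castSucc with hzadd
    have htrans : tpair (φ'.comp ((lam (D - n)).comp θ.toLinearMap))
        (ψ'.comp ((lam n).comp θ.toLinearMap))
        = (tpair (φ'.comp (lam (D - n))) (ψ'.comp (lam n))).comp
          (Algebra.TensorProduct.map θ θ).toLinearMap := by
      apply TensorProduct.ext'
      intro x y
      simp [tpair_tmul, Algebra.TensorProduct.map_tmul]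
    have hprod : Algebra.TensorProduct.map θ θ (∏ j, ((1 : BottRing (m + 1) nd β) ⊗ₜ[ZMod 2] BottY (m + 1) nd β j -
        BottY (m + 1) nd β j ⊗ₜ[ZMod 2] (1 : BottRing (m + 1) nd β)) ^ d j)
        = (Algebra.TensorProduct.map ι ι zadd) *
          ((rt ⊗ₜ[ZMod 2] (1 : AdjoinRoot g))
            + ((1 : AdjoinRoot g) ⊗ₜ[ZMod 2] rt)) ^ D := by
      rw [map_prod, Fin.prod_univ_castSucc]
      congr 1
      · rw [hzadd, map_prod]
        refine Finset.prod_congr rfl fun j _ => ?_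
        simp only [map_pow, map_sub, map_add, Algebra.TensorProduct.map_tmul, map_one,
          hθY, hvc, zmod2_sub_eq_add]
      · simp only [map_pow, map_sub, map_add, Algebra.TensorProduct.map_tmul, map_one,
          hθY, hvlast, zmod2_sub_eq_add, ← hDdef]
        rw [add_comm ((1 : AdjoinRoot g) ⊗ₜ[ZMod 2] rt)]
    rw [htrans, LinearMap.comp_apply, AlgHom.toLinearMap_apply, hprod, hlam, hrt, hι]
    rw [step_pairing hmonic hdeg hnD hD2n
      (fun k hk => hc (Fin.last m) k (by rw [← hDdef]; exact hk)) φ' ψ' zadd]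
    have hzz : (∏ j : Fin m, ((1 : BottRing m (fun j => nd j.castSucc)
        (fun j ℓ k => β j.castSucc ℓ.castSucc k)) ⊗ₜ[ZMod 2] Y' j -
        Y' j ⊗ₜ[ZMod 2] (1 : BottRing m (fun j => nd j.castSucc)
        (fun j ℓ k => β j.castSucc ℓ.castSucc k))) ^ d j.castSucc) = zadd := by
      rw [hzadd]
      exact Finset.prod_congr rfl fun j _ => by rw [zmod2_sub_eq_add]
    rw [← hzz]
    exact hIH

end Stmt5Aux

/-! ### The statement -/

theorem stmt5 (m : ℕ) (nd : Fin m → ℕ) (hnd : ∀ j, 0 < nd j)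
    (β : Fin m → Fin m → ℕ → ZMod 2) (r : Fin m → ℕ)
    (h : ∀ j, nd j ≤ 2 ^ r j - 1 ∧ 2 ^ r j - 1 < 2 * nd j) :
    (∀ j, LinearMap.mul' (ZMod 2) (BottRing m nd β)
      ((1 : BottRing m nd β) ⊗ₜ[ZMod 2] BottY m nd β j -
        BottY m nd β j ⊗ₜ[ZMod 2] (1 : BottRing m nd β)) = 0) ∧
    (∏ j, ((1 : BottRing m nd β) ⊗ₜ[ZMod 2] BottY m nd β j -
      BottY m nd β j ⊗ₜ[ZMod 2] (1 : BottRing m nd β)) ^ (2 ^ r j - 1)) ≠ 0 := by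
  constructor
  · intro j
    rw [map_sub, LinearMap.mul'_apply, LinearMap.mul'_apply, one_mul, mul_one, sub_self]
  · intro h0
    obtain ⟨φ, ψ, hΦ⟩ := bott_key m nd β (fun j => 2 ^ r j - 1) (fun j => (h j).1)
      (fun j => (h j).2) (fun j i hi => zmod2_choose_two_pow_sub_one
        (by have h1 : i ≤ 2 ^ r j - 1 := hi
            have h2 : 1 ≤ 2 ^ r j := Nat.one_le_two_pow
            omega))
    rw [h0, map_zero] at hΦ
    exact one_ne_zero hΦ.symm

end
end
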